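/- arXiv:1706.09345 — 2 statements merged into one kernel-verified Lean document; each statement's English description precedes it below -/
import Mathlib

section
/- Let N ≥ 1, let Φ ∈ L¹(ℝ^N) be nonnegative and even, and let f(λ) = ∫_{ℝ^N} cos(⟨λ, θ⟩) Φ(θ) dθ be its (real) Fourier transform. Let γ be a centered Gaussian probability measure on ℝ^N. Then for every a ∈ ℝ^N, ∫_{ℝ^N} f(a + λ) γ(dλ) ≤ ∫_{ℝ^N} f(λ) γ(dλ); that is, the Gaussian average of a positive definite function, shifted by a, is maximized at a = 0. -/
open MeasureTheory ProbabilityTheory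
open scoped RealInnerProductSpace NNReal

open Real Complex

lemma exp_cos_integral_nonneg {v : ℝ≥0} (hv : v ≠ 0) :
    0 ≤ ∫ x : ℝ, rexp (-x^2/(2*(v:ℝ))) * Real.cos x := by
  have hv' : (0:ℝ) < (v:ℝ) := lt_of_le_of_ne (v.coe_nonneg) (by exact_mod_cast (Ne.symm hv))
  set b : ℂ := ((-(1/(2*(v:ℝ))) : ℝ) : ℂ) with hb_def
  have hb : b.re < 0 := by
    simp only [hb_def, Complex.ofReal_re]
    simp only [neg_lt, neg_zero]
    positivity
  have hre : ∀ x : ℝ, rexp (-x^2/(2*(v:ℝ))) * Real.cos x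
      = (Complex.exp (b * (x:ℂ)^2 + Complex.I * (x:ℂ) + 0)).re := by
    intro x
    have h1 : b * (x:ℂ)^2 + Complex.I * (x:ℂ) + 0
        = ((-x^2/(2*(v:ℝ)) : ℝ) : ℂ) + (x:ℂ) * Complex.I := by
      rw [hb_def]; push_cast; ring
    rw [h1, Complex.exp_add, ← Complex.ofReal_exp, Complex.re_ofReal_mul,
      Complex.exp_ofReal_mul_I_re]
  have hint := integrable_cexp_quadratic' hb Complex.I 0
  have hval := integral_cexp_quadratic hb Complex.I 0
  calc (0:ℝ) ≤ ((π / -b) ^ (1/2 : ℂ) * Complex.exp (0 - Complex.I^2/(4*b))).re := by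
        have h2 : (π / -b : ℂ) = ((2*π*(v:ℝ) : ℝ) : ℂ) := by
          rw [hb_def]; push_cast
          rw [neg_neg]
          field_simp
        have h3 : (0 : ℂ) - Complex.I^2/(4*b) = ((-(v:ℝ)/2 : ℝ) : ℂ) := by
          rw [hb_def, Complex.I_sq]; push_cast
          field_simp
          ring
        rw [h2, h3, ← Complex.ofReal_exp]
        have h4 : ((2*π*(v:ℝ) : ℝ) : ℂ) ^ (1/2 : ℂ)
            = (((2*π*(v:ℝ)) ^ ((1:ℝ)/2) : ℝ) : ℂ) := by
          rw [Complex.ofReal_cpow (by positivity)]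
          norm_num
        rw [h4, ← Complex.ofReal_mul, Complex.ofReal_re]
        positivity
    _ = (∫ x : ℝ, Complex.exp (b * (x:ℂ)^2 + Complex.I * (x:ℂ) + 0)).re := by rw [hval]
    _ = ∫ x : ℝ, (Complex.exp (b * (x:ℂ)^2 + Complex.I * (x:ℂ) + 0)).re := (integral_re hint).symm
    _ = ∫ x : ℝ, rexp (-x^2/(2*(v:ℝ))) * Real.cos x := by
        congr 1; funext x; rw [hre]

lemma cos_gaussianReal_nonneg (v : ℝ≥0) : 0 ≤ ∫ x, Real.cos x ∂(gaussianReal 0 v) := by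
  by_cases hv : v = 0
  · rw [hv, gaussianReal_zero_var, integral_dirac]
    simp
  · rw [gaussianReal_of_var_ne_zero _ hv]
    have hd : (gaussianPDF 0 v) = fun x => ((gaussianPDFReal 0 v x).toNNReal : ENNReal) := rfl
    rw [hd, integral_withDensity_eq_integral_smul
      ((measurable_gaussianPDFReal 0 v).real_toNNReal) Real.cos]
    have heq : ∀ x : ℝ, ((gaussianPDFReal 0 v x).toNNReal : ℝ≥0) • Real.cos x
        = (√(2 * π * (v:ℝ)))⁻¹ * (rexp (-x^2/(2*(v:ℝ))) * Real.cos x) := by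
      intro x
      rw [NNReal.smul_def, Real.coe_toNNReal _ (gaussianPDFReal_nonneg 0 v x)]
      rw [gaussianPDFReal]
      rw [smul_eq_mul]
      ring_nf
    simp_rw [heq]
    rw [integral_const_mul]
    have h1 : (0:ℝ) ≤ (√(2 * π * (v:ℝ)))⁻¹ := by positivity
    exact mul_nonneg h1 (exp_cos_integral_nonneg hv)

lemma sin_gaussianReal_zero (v : ℝ≥0) : ∫ x, Real.sin x ∂(gaussianReal 0 v) = 0 := by
  have h : (gaussianReal 0 v).map (fun x : ℝ => (-1 : ℝ) * x) = gaussianReal 0 v := by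
    have h1 := gaussianReal_map_const_mul (μ := (0:ℝ)) (v := v) (-1)
    have h2 : (⟨(-1:ℝ)^2, sq_nonneg _⟩ : ℝ≥0) = 1 := by ext; norm_num
    rw [mul_zero] at h1
    convert h1 using 2
    ext; simp
  have h2 : ∫ x, Real.sin x ∂(gaussianReal 0 v)
      = ∫ x, Real.sin ((-1:ℝ) * x) ∂(gaussianReal 0 v) := by
    conv_lhs => rw [← h]
    rw [integral_map (by fun_prop) (Real.continuous_sin.stronglyMeasurable.aestronglyMeasurable)]
  have h3 : ∫ x, Real.sin ((-1:ℝ) * x) ∂(gaussianReal 0 v)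
      = - ∫ x, Real.sin x ∂(gaussianReal 0 v) := by
    simp_rw [neg_one_mul, Real.sin_neg]
    exact integral_neg _
  linarith [h2, h3]

/-- The Gaussian average of a (shifted) positive definite function is maximized at
zero shift: if `f(λ) = ∫ cos⟪λ,θ⟫ Φ(θ) dθ` with `Φ ∈ L¹` nonnegative and even, and
`γ` is a centered Gaussian probability measure on `ℝ^N` (i.e. every continuous
linear functional has a centered Gaussian law), then
`∫ f(a + λ) dγ(λ) ≤ ∫ f(λ) dγ(λ)` for every `a`. -/
theorem gaussian_average_pos_def_max
    (N : ℕ) (hN : 1 ≤ N)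
    (Φ : EuclideanSpace ℝ (Fin N) → ℝ)
    (hΦ_int : Integrable Φ (volume : Measure (EuclideanSpace ℝ (Fin N))))
    (hΦ_nonneg : ∀ θ, 0 ≤ Φ θ) (hΦ_even : ∀ θ, Φ (-θ) = Φ θ)
    (γ : Measure (EuclideanSpace ℝ (Fin N))) [IsProbabilityMeasure γ]
    (hγ : ∀ l : EuclideanSpace ℝ (Fin N) →L[ℝ] ℝ, ∃ v : ℝ≥0,
      γ.map l = gaussianReal 0 v) :
    ∀ a : EuclideanSpace ℝ (Fin N),
      (∫ lam, (∫ θ, Real.cos ⟪a + lam, θ⟫ * Φ θ) ∂γ) ≤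
        ∫ lam, (∫ θ, Real.cos ⟪lam, θ⟫ * Φ θ) ∂γ := by
  intro a
  have hmeas : ∀ c : EuclideanSpace ℝ (Fin N),
      AEStronglyMeasurable
        (fun p : EuclideanSpace ℝ (Fin N) × EuclideanSpace ℝ (Fin N) =>
          Real.cos ⟪c + p.1, p.2⟫ * Φ p.2) (γ.prod volume) := by
    intro c
    apply AEStronglyMeasurable.mul
    · exact (Real.continuous_cos.comp (continuous_inner.comp
        ((continuous_const.add continuous_fst).prodMk continuous_snd))).aestronglyMeasurable
    · exact hΦ_int.aestronglyMeasurable.comp_snd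
  have hint : ∀ c : EuclideanSpace ℝ (Fin N),
      Integrable
        (fun p : EuclideanSpace ℝ (Fin N) × EuclideanSpace ℝ (Fin N) =>
          Real.cos ⟪c + p.1, p.2⟫ * Φ p.2) (γ.prod volume) := by
    intro c
    refine Integrable.mono' (g := fun p => Φ p.2) ?_ (hmeas c) (Filter.Eventually.of_forall ?_)
    · have h1 : Integrable
          (fun p : EuclideanSpace ℝ (Fin N) × EuclideanSpace ℝ (Fin N) => (1:ℝ) * Φ p.2)
          (γ.prod volume) := Integrable.mul_prod (integrable_const 1) hΦ_int
      simpa using h1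
    · intro p
      rw [norm_mul]
      calc ‖Real.cos ⟪c + p.1, p.2⟫‖ * ‖Φ p.2‖ ≤ 1 * ‖Φ p.2‖ := by
            apply mul_le_mul_of_nonneg_right _ (norm_nonneg _)
            rw [Real.norm_eq_abs]
            exact Real.abs_cos_le_one _
        _ = Φ p.2 := by rw [one_mul, Real.norm_eq_abs, _root_.abs_of_nonneg (hΦ_nonneg _)]
  have hswap : ∀ c : EuclideanSpace ℝ (Fin N),
      (∫ lam, (∫ θ, Real.cos ⟪c + lam, θ⟫ * Φ θ) ∂γ)
        = ∫ θ, (∫ lam, Real.cos ⟪c + lam, θ⟫ ∂γ) * Φ θ := by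
    intro c
    rw [integral_integral_swap (hint c)]
    congr 1
    funext θ
    rw [← integral_mul_const]
  have hintθ : ∀ c : EuclideanSpace ℝ (Fin N),
      Integrable (fun θ => (∫ lam, Real.cos ⟪c + lam, θ⟫ ∂γ) * Φ θ)
        (volume : Measure (EuclideanSpace ℝ (Fin N))) := by
    intro c
    have h1 := (hint c).integral_prod_right
    refine h1.congr (Filter.Eventually.of_forall fun θ => ?_)
    show (∫ lam, Real.cos ⟪c + lam, θ⟫ * Φ θ ∂γ) = _
    rw [integral_mul_const]
  have hpt : ∀ θ : EuclideanSpace ℝ (Fin N),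
      (∫ lam, Real.cos ⟪a + lam, θ⟫ ∂γ) * Φ θ ≤ (∫ lam, Real.cos ⟪lam, θ⟫ ∂γ) * Φ θ := by
    intro θ
    obtain ⟨v, hv⟩ := hγ (innerSL ℝ θ)
    have hmap : ∀ g : ℝ → ℝ, Continuous g →
        ∫ lam, g ⟪lam, θ⟫ ∂γ = ∫ x, g x ∂(gaussianReal 0 v) := by
      intro g hg
      have hl : (fun lam : EuclideanSpace ℝ (Fin N) => g ⟪lam, θ⟫)
          = fun lam => g ((innerSL ℝ θ) lam) := by
        funext lam
        rw [innerSL_apply_apply, real_inner_comm]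
      rw [hl, ← hv, integral_map ((innerSL ℝ θ).continuous.measurable.aemeasurable)
        hg.stronglyMeasurable.aestronglyMeasurable]
    have hIc : ∫ lam, Real.cos ⟪lam, θ⟫ ∂γ = ∫ x, Real.cos x ∂(gaussianReal 0 v) :=
      hmap _ Real.continuous_cos
    have hIs : ∫ lam, Real.sin ⟪lam, θ⟫ ∂γ = 0 := by
      rw [hmap _ Real.continuous_sin]
      exact sin_gaussianReal_zero v
    have hbound : ∀ g : ℝ → ℝ, Continuous g → (∀ x, |g x| ≤ 1) →
        Integrable (fun lam => g ⟪lam, θ⟫) γ := by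
      intro g hg hb
      refine Integrable.mono' (integrable_const (1:ℝ)) ?_
        (Filter.Eventually.of_forall fun lam => ?_)
      · exact (hg.comp (continuous_id.inner continuous_const)).aestronglyMeasurable
      · rw [Real.norm_eq_abs]
        exact hb _
    have hshift : (∫ lam, Real.cos ⟪a + lam, θ⟫ ∂γ)
        = Real.cos ⟪a, θ⟫ * (∫ lam, Real.cos ⟪lam, θ⟫ ∂γ) := by
      have h1 : ∀ lam : EuclideanSpace ℝ (Fin N), Real.cos ⟪a + lam, θ⟫
          = Real.cos ⟪a, θ⟫ * Real.cos ⟪lam, θ⟫ - Real.sin ⟪a, θ⟫ * Real.sin ⟪lam, θ⟫ := by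
        intro lam
        rw [inner_add_left]
        exact Real.cos_add _ _
      simp_rw [h1]
      rw [integral_sub, integral_const_mul, integral_const_mul, hIs, mul_zero, sub_zero]
      · exact (hbound _ Real.continuous_cos Real.abs_cos_le_one).const_mul _
      · exact (hbound _ Real.continuous_sin Real.abs_sin_le_one).const_mul _
    rw [hshift]
    have h0 : 0 ≤ ∫ lam, Real.cos ⟪lam, θ⟫ ∂γ := hIc ▸ cos_gaussianReal_nonneg v
    refine mul_le_mul_of_nonneg_right ?_ (hΦ_nonneg θ)
    calc Real.cos ⟪a, θ⟫ * (∫ lam, Real.cos ⟪lam, θ⟫ ∂γ)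
        ≤ 1 * (∫ lam, Real.cos ⟪lam, θ⟫ ∂γ) :=
          mul_le_mul_of_nonneg_right (Real.cos_le_one _) h0
      _ = _ := one_mul _
  have h0swap := hswap 0
  simp only [zero_add] at h0swap
  calc (∫ lam, (∫ θ, Real.cos ⟪a + lam, θ⟫ * Φ θ) ∂γ)
      = ∫ θ, (∫ lam, Real.cos ⟪a + lam, θ⟫ ∂γ) * Φ θ := hswap a
    _ ≤ ∫ θ, (∫ lam, Real.cos ⟪lam, θ⟫ ∂γ) * Φ θ := by
        have h0int : Integrable
            (fun θ => (∫ lam, Real.cos ⟪lam, θ⟫ ∂γ) * Φ θ)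
            (volume : Measure (EuclideanSpace ℝ (Fin N))) := by
          have := hintθ 0
          simpa only [zero_add] using this
        exact integral_mono (hintθ a) h0int hpt
    _ = ∫ lam, (∫ θ, Real.cos ⟪lam, θ⟫ * Φ θ) ∂γ := h0swap.symm
end

section
/- Let p > 0 and let x₁, x₂, y ∈ ℝ^d with y ≠ x₁ and y ≠ x₂. Then | |y−x₁|^{-p} − |y−x₂|^{-p} | ≤ p · |x₁ − x₂| · ( 1/(|y−x₁|^p |y−x₂|) + 1/(|y−x₁| |y−x₂|^p) ). -/
open Real

lemma riesz_aux (p a b : ℝ) (hp : 0 < p) (ha : 0 < a) (hab : a ≤ b) :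
    a ^ (-p) - b ^ (-p) ≤ p * (b - a) * (1 / (a ^ p * b) + 1 / (a * b ^ p)) := by
  have hb : 0 < b := ha.trans_le hab
  have hap : 0 < a ^ p := Real.rpow_pos_of_pos ha p
  have hbp : 0 < b ^ p := Real.rpow_pos_of_pos hb p
  rcases eq_or_lt_of_le hab with rfl | hab'
  · norm_num
  obtain ⟨c, hc, hceq⟩ := exists_hasDerivAt_eq_slope (fun t => t ^ p)
      (fun t => p * t ^ (p - 1)) hab'
      (by
        apply ContinuousOn.rpow_const continuousOn_id
        intro x hx
        exact Or.inl (ne_of_gt (lt_of_lt_of_le ha hx.1)))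
      (by
        intro x hx
        have hx0 : 0 < x := ha.trans hx.1
        simpa [mul_comm] using (Real.hasDerivAt_rpow_const (Or.inl hx0.ne')))
  have hc0 : 0 < c := ha.trans hc.1
  have hba : 0 ≤ b - a := by linarith
  have hsub : b ^ p - a ^ p = p * c ^ (p - 1) * (b - a) := by
    rw [eq_div_iff (sub_ne_zero.mpr hab'.ne')] at hceq
    linarith [hceq]
  have hdiff : a ^ (-p) - b ^ (-p) = (b ^ p - a ^ p) / (a ^ p * b ^ p) := by
    rw [Real.rpow_neg ha.le, Real.rpow_neg hb.le]
    field_simp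
  rw [hdiff, hsub, div_le_iff₀ (by positivity)]
  have hR : p * (b - a) * (1 / (a ^ p * b) + 1 / (a * b ^ p)) * (a ^ p * b ^ p) =
      p * (b - a) * (b ^ p / b) + p * (b - a) * (a ^ p / a) := by
    field_simp
  rw [hR]
  rcases le_or_gt 1 p with h1 | h1
  · have hcb : c ^ (p - 1) ≤ b ^ p / b := by
      have e : b ^ p / b = b ^ (p - 1) := by rw [Real.rpow_sub hb, Real.rpow_one]
      rw [e]
      exact Real.rpow_le_rpow hc0.le hc.2.le (by linarith)
    have h2 : p * c ^ (p - 1) * (b - a) ≤ p * (b - a) * (b ^ p / b) := by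
      have := mul_le_mul_of_nonneg_right (mul_le_mul_of_nonneg_left hcb hp.le) hba
      linarith [this]
    have h3 : (0:ℝ) ≤ p * (b - a) * (a ^ p / a) := by positivity
    linarith
  · have hca : c ^ (p - 1) ≤ a ^ p / a := by
      have e : a ^ p / a = a ^ (p - 1) := by rw [Real.rpow_sub ha, Real.rpow_one]
      rw [e]
      exact Real.rpow_le_rpow_of_nonpos ha hc.1.le (by linarith)
    have h2 : p * c ^ (p - 1) * (b - a) ≤ p * (b - a) * (a ^ p / a) := by
      have := mul_le_mul_of_nonneg_right (mul_le_mul_of_nonneg_left hca hp.le) hba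
      linarith [this]
    have h3 : (0:ℝ) ≤ p * (b - a) * (b ^ p / b) := by positivity
    linarith

/-- Difference bound for Riesz potentials: for `p > 0` and `y ≠ x₁`, `y ≠ x₂`,
`| |y-x₁|^{-p} - |y-x₂|^{-p} | ≤ p |x₁-x₂| (|y-x₁|^{-p}|y-x₂|^{-1} + |y-x₁|^{-1}|y-x₂|^{-p})`. -/
theorem riesz_potential_difference_bound
    (d : ℕ) (p : ℝ) (hp : 0 < p)
    (x₁ x₂ y : EuclideanSpace ℝ (Fin d)) (h₁ : y ≠ x₁) (h₂ : y ≠ x₂) :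
    |‖y - x₁‖ ^ (-p) - ‖y - x₂‖ ^ (-p)| ≤
      p * ‖x₁ - x₂‖ *
        (1 / (‖y - x₁‖ ^ p * ‖y - x₂‖) + 1 / (‖y - x₁‖ * ‖y - x₂‖ ^ p)) := by
  set a := ‖y - x₁‖ with ha'
  set b := ‖y - x₂‖ with hb'
  have ha : 0 < a := by simpa [ha'] using sub_ne_zero.mpr h₁
  have hb : 0 < b := by simpa [hb'] using sub_ne_zero.mpr h₂
  have hnd : |a - b| ≤ ‖x₁ - x₂‖ := by
    rw [ha', hb', norm_sub_rev x₁ x₂]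
    simpa [show y - x₁ - (y - x₂) = x₂ - x₁ by abel] using
      abs_norm_sub_norm_le (y - x₁) (y - x₂)
  have hap : 0 < a ^ p := Real.rpow_pos_of_pos ha p
  have hbp : 0 < b ^ p := Real.rpow_pos_of_pos hb p
  have hSpos : (0:ℝ) ≤ 1 / (a ^ p * b) + 1 / (a * b ^ p) := by positivity
  rcases le_total a b with hab | hab
  · have key := riesz_aux p a b hp ha hab
    have hmono : b ^ (-p) ≤ a ^ (-p) :=
      Real.rpow_le_rpow_of_nonpos ha hab (by linarith)
    rw [abs_of_nonneg (by linarith)]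
    calc a ^ (-p) - b ^ (-p) ≤ p * (b - a) * (1 / (a ^ p * b) + 1 / (a * b ^ p)) := key
      _ ≤ p * ‖x₁ - x₂‖ * (1 / (a ^ p * b) + 1 / (a * b ^ p)) := by
          apply mul_le_mul_of_nonneg_right _ hSpos
          apply mul_le_mul_of_nonneg_left _ hp.le
          calc b - a ≤ |a - b| := by rw [abs_sub_comm]; exact le_abs_self _
            _ ≤ ‖x₁ - x₂‖ := hnd
  · have key := riesz_aux p b a hp hb hab
    have hmono : a ^ (-p) ≤ b ^ (-p) :=
      Real.rpow_le_rpow_of_nonpos hb hab (by linarith)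
    rw [abs_of_nonpos (by linarith), neg_sub]
    calc b ^ (-p) - a ^ (-p) ≤ p * (a - b) * (1 / (b ^ p * a) + 1 / (b * a ^ p)) := key
      _ ≤ p * ‖x₁ - x₂‖ * (1 / (b ^ p * a) + 1 / (b * a ^ p)) := by
          apply mul_le_mul_of_nonneg_right _ (by positivity)
          apply mul_le_mul_of_nonneg_left _ hp.le
          calc a - b ≤ |a - b| := le_abs_self _
            _ ≤ ‖x₁ - x₂‖ := hnd
      _ = p * ‖x₁ - x₂‖ * (1 / (a ^ p * b) + 1 / (a * b ^ p)) := by ring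
end
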